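/- Let G be an E-free graph and let Q = v_1 v_2 v_3 v_4 v_5 v_1 be an induced 5-cycle in G which is a smallest induced odd cycle of G. If w ∈ A_i and w' ∈ A_{i+1} ∪ A_{i-1} ∪ B_{i-1}, then ww' is an edge of G. -/
import Mathlib


/-- `H` is contained in `G` as an induced subgraph. -/
def ContainsInduced {α β : Type*} (H : SimpleGraph α) (G : SimpleGraph β) : Prop :=
  ∃ f : α ↪ β, ∀ a b, G.Adj (f a) (f b) ↔ H.Adj a b

/-- The graph `E = S_{1,2,2}`: centre `0`, leaf `1`, and the paths `0 2 3` and `0 4 5`. -/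
def graphE : SimpleGraph (Fin 6) :=
  SimpleGraph.fromRel (fun a b =>
    ((a : ℕ), (b : ℕ)) ∈ [(0, 1), (0, 2), (2, 3), (0, 4), (4, 5)])

/-- `u : ZMod k → V` lists the vertices (in cyclic order) of an induced cycle of
length `k` in `G`. -/
def IsInducedCycle {V : Type*} (G : SimpleGraph V) {k : ℕ} (u : ZMod k → V) : Prop :=
  Function.Injective u ∧ ∀ i j : ZMod k, G.Adj (u i) (u j) ↔ (j = i + 1 ∨ i = j + 1)

/-- `v : ZMod p → V` is a smallest induced odd cycle of `G` of length `p ≥ 5`: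
an induced odd cycle of length `p ≥ 5` such that `G` has no induced odd cycle of
length `k` with `5 ≤ k < p`. -/
def IsSmallestInducedOddCycle {V : Type*} (G : SimpleGraph V) {p : ℕ}
    (v : ZMod p → V) : Prop :=
  5 ≤ p ∧ Odd p ∧ IsInducedCycle G v ∧
    ∀ k : ℕ, 5 ≤ k → k < p → Odd k → ∀ u : ZMod k → V, ¬ IsInducedCycle G u

/-- `A_i`: the vertices outside the cycle `Q` whose neighbourhood on `Q` is
exactly `{v_i}`. -/
def setA {V : Type*} (G : SimpleGraph V) {p : ℕ} (v : ZMod p → V) (i : ZMod p) :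
    Set V :=
  {w | w ∉ Set.range v ∧ ∀ j : ZMod p, G.Adj w (v j) ↔ j = i}

/-- `B_i`: the vertices outside the cycle `Q` whose neighbourhood on `Q` is
exactly `{v_i, v_{i+2}}`. -/
def setB {V : Type*} (G : SimpleGraph V) {p : ℕ} (v : ZMod p → V) (i : ZMod p) :
    Set V :=
  {w | w ∉ Set.range v ∧ ∀ j : ZMod p, G.Adj w (v j) ↔ (j = i ∨ j = i + 2)}

/-- `C_i`: the vertices outside the cycle `Q` whose neighbourhood on `Q` is
exactly `{v_i, v_{i+1}, v_{i+2}}`. -/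
def setC {V : Type*} (G : SimpleGraph V) {p : ℕ} (v : ZMod p → V) (i : ZMod p) :
    Set V :=
  {w | w ∉ Set.range v ∧ ∀ j : ZMod p, G.Adj w (v j) ↔ (j = i ∨ j = i + 1 ∨ j = i + 2)}

/-- `D_i`: the vertices outside the cycle `Q` whose neighbourhood on `Q` is
exactly `{v_i, v_{i+1}, v_{i+2}, v_{i+3}}`. -/
def setD {V : Type*} (G : SimpleGraph V) {p : ℕ} (v : ZMod p → V) (i : ZMod p) :
    Set V :=
  {w | w ∉ Set.range v ∧
    ∀ j : ZMod p, G.Adj w (v j) ↔ (j = i ∨ j = i + 1 ∨ j = i + 2 ∨ j = i + 3)}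

lemma mkE {V : Type*} (G : SimpleGraph V) (c l p1 q1 p2 q2 : V)
    (hcl : G.Adj c l) (hcp1 : G.Adj c p1) (hp1q1 : G.Adj p1 q1)
    (hcp2 : G.Adj c p2) (hp2q2 : G.Adj p2 q2)
    (hcq1 : ¬G.Adj c q1) (hcq2 : ¬G.Adj c q2)
    (hlp1 : ¬G.Adj l p1) (hlq1 : ¬G.Adj l q1) (hlp2 : ¬G.Adj l p2) (hlq2 : ¬G.Adj l q2)
    (hp1p2 : ¬G.Adj p1 p2) (hp1q2 : ¬G.Adj p1 q2) (hq1p2 : ¬G.Adj q1 p2)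
    (hq1q2 : ¬G.Adj q1 q2) :
    ContainsInduced graphE G := by
  have n01 : c ≠ l := G.ne_of_adj hcl
  have n02 : c ≠ p1 := G.ne_of_adj hcp1
  have n03 : c ≠ q1 := by rintro rfl; exact hlq1 hcl.symm
  have n04 : c ≠ p2 := G.ne_of_adj hcp2
  have n05 : c ≠ q2 := by rintro rfl; exact hlq2 hcl.symm
  have n12 : l ≠ p1 := by rintro rfl; exact hlq1 hp1q1
  have n13 : l ≠ q1 := by rintro rfl; exact hcq1 hcl
  have n14 : l ≠ p2 := by rintro rfl; exact hlq2 hp2q2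
  have n15 : l ≠ q2 := by rintro rfl; exact hcq2 hcl
  have n23 : p1 ≠ q1 := G.ne_of_adj hp1q1
  have n24 : p1 ≠ p2 := by rintro rfl; exact hp1q2 hp2q2
  have n25 : p1 ≠ q2 := by rintro rfl; exact hcq2 hcp1
  have n34 : q1 ≠ p2 := by rintro rfl; exact hq1q2 hp2q2
  have n35 : q1 ≠ q2 := by rintro rfl; exact hp1q2 hp1q1
  have n45 : p2 ≠ q2 := G.ne_of_adj hp2q2
  have hcl' := hcl.symm; have hcp1' := hcp1.symm; have hp1q1' := hp1q1.symm
  have hcp2' := hcp2.symm; have hp2q2' := hp2q2.symm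
  have hcq1' : ¬G.Adj q1 c := fun h => hcq1 h.symm
  have hcq2' : ¬G.Adj q2 c := fun h => hcq2 h.symm
  have hlp1' : ¬G.Adj p1 l := fun h => hlp1 h.symm
  have hlq1' : ¬G.Adj q1 l := fun h => hlq1 h.symm
  have hlp2' : ¬G.Adj p2 l := fun h => hlp2 h.symm
  have hlq2' : ¬G.Adj q2 l := fun h => hlq2 h.symm
  have hp1p2' : ¬G.Adj p2 p1 := fun h => hp1p2 h.symm
  have hp1q2' : ¬G.Adj q2 p1 := fun h => hp1q2 h.symm
  have hq1p2' : ¬G.Adj p2 q1 := fun h => hq1p2 h.symm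
  have hq1q2' : ¬G.Adj q2 q1 := fun h => hq1q2 h.symm
  have hgE : ∀ a b : Fin 6, graphE.Adj a b ↔
      (a ≠ b ∧ ((((a : ℕ), (b : ℕ)) ∈ [(0, 1), (0, 2), (2, 3), (0, 4), (4, 5)]) ∨
        (((b : ℕ), (a : ℕ)) ∈ [(0, 1), (0, 2), (2, 3), (0, 4), (4, 5)]))) :=
    fun a b => SimpleGraph.fromRel_adj _ a b
  refine ⟨⟨![c, l, p1, q1, p2, q2], ?_⟩, ?_⟩
  · intro a b h
    fin_cases a <;> fin_cases b <;>
      first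
        | rfl
        | exact absurd h (by assumption)
        | exact absurd h.symm (by assumption)
  · intro a b
    fin_cases a <;> fin_cases b <;>
      first
        | exact iff_of_true (by assumption) (by rw [hgE]; decide)
        | exact iff_of_false (by assumption) (by rw [hgE]; decide)
        | exact iff_of_false (G.irrefl) (by rw [hgE]; decide)

/-- Let `G` be an `E`-free graph and let `Q = v_1 … v_5 v_1` be an induced 5-cycle of `G`
which is a smallest induced odd cycle of `G`.  If `w ∈ A_i` and
`w' ∈ A_{i+1} ∪ A_{i-1} ∪ B_{i-1}`, then `w w'` is an edge of `G`. -/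
theorem A_nbr_edges {V : Type*} [Fintype V] (G : SimpleGraph V)
    (hE : ¬ ContainsInduced graphE G)
    (v : ZMod 5 → V) (hQ : IsSmallestInducedOddCycle G v)
    (i : ZMod 5) (w w' : V) (hw : w ∈ setA G v i)
    (hw' : w' ∈ setA G v (i + 1) ∪ setA G v (i - 1) ∪ setB G v (i - 1)) :
    G.Adj w w' := by
  obtain ⟨-, -, ⟨hinj, hadj⟩, -⟩ := hQ
  obtain ⟨hwr, hwadj⟩ := hw
  by_contra hne
  apply hE
  have hva : ∀ a b : ZMod 5, b = a + 1 → G.Adj (v a) (v b) :=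
    fun a b h => (hadj a b).mpr (Or.inl h)
  have hvn : ∀ a b : ZMod 5, b ≠ a + 1 → a ≠ b + 1 → ¬ G.Adj (v a) (v b) :=
    fun a b h1 h2 h => by rcases (hadj a b).mp h with h' | h'; exacts [h1 h', h2 h']
  have hwv : G.Adj w (v i) := (hwadj i).mpr rfl
  have hwn : ∀ j, j ≠ i → ¬ G.Adj w (v j) := fun j hj h => hj ((hwadj j).mp h)
  rcases hw' with (h' | h') | h'
  · obtain ⟨h'r, h'adj⟩ := h'
    have hw'v : G.Adj w' (v (i + 1)) := (h'adj (i + 1)).mpr rfl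
    have hw'n : ∀ j, j ≠ i + 1 → ¬ G.Adj w' (v j) := fun j hj h => hj ((h'adj j).mp h)
    exact mkE G (v i) w (v (i + 1)) w' (v (i - 1)) (v (i + 3))
      hwv.symm
      (hva i (i + 1) rfl)
      hw'v.symm
      ((hva (i - 1) i ((by decide : ∀ j : ZMod 5, j = j - 1 + 1) i)).symm)
      ((hva (i + 3) (i - 1) ((by decide : ∀ j : ZMod 5, j - 1 = j + 3 + 1) i)).symm)
      (fun h => hw'n i ((by decide : ∀ j : ZMod 5, j ≠ j + 1) i) h.symm)
      (hvn i (i + 3) ((by decide : ∀ j : ZMod 5, j + 3 ≠ j + 1) i)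
        ((by decide : ∀ j : ZMod 5, j ≠ j + 3 + 1) i))
      (hwn (i + 1) ((by decide : ∀ j : ZMod 5, j + 1 ≠ j) i))
      hne
      (hwn (i - 1) ((by decide : ∀ j : ZMod 5, j - 1 ≠ j) i))
      (hwn (i + 3) ((by decide : ∀ j : ZMod 5, j + 3 ≠ j) i))
      (hvn (i + 1) (i - 1) ((by decide : ∀ j : ZMod 5, j - 1 ≠ j + 1 + 1) i)
        ((by decide : ∀ j : ZMod 5, j + 1 ≠ j - 1 + 1) i))
      (hvn (i + 1) (i + 3) ((by decide : ∀ j : ZMod 5, j + 3 ≠ j + 1 + 1) i)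
        ((by decide : ∀ j : ZMod 5, j + 1 ≠ j + 3 + 1) i))
      (hw'n (i - 1) ((by decide : ∀ j : ZMod 5, j - 1 ≠ j + 1) i))
      (hw'n (i + 3) ((by decide : ∀ j : ZMod 5, j + 3 ≠ j + 1) i))
  · obtain ⟨h'r, h'adj⟩ := h'
    have hw'v : G.Adj w' (v (i - 1)) := (h'adj (i - 1)).mpr rfl
    have hw'n : ∀ j, j ≠ i - 1 → ¬ G.Adj w' (v j) := fun j hj h => hj ((h'adj j).mp h)
    exact mkE G (v i) w (v (i - 1)) w' (v (i + 1)) (v (i + 2))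
      hwv.symm
      ((hva (i - 1) i ((by decide : ∀ j : ZMod 5, j = j - 1 + 1) i)).symm)
      hw'v.symm
      (hva i (i + 1) rfl)
      (hva (i + 1) (i + 2) ((by decide : ∀ j : ZMod 5, j + 2 = j + 1 + 1) i))
      (fun h => hw'n i ((by decide : ∀ j : ZMod 5, j ≠ j - 1) i) h.symm)
      (hvn i (i + 2) ((by decide : ∀ j : ZMod 5, j + 2 ≠ j + 1) i)
        ((by decide : ∀ j : ZMod 5, j ≠ j + 2 + 1) i))
      (hwn (i - 1) ((by decide : ∀ j : ZMod 5, j - 1 ≠ j) i))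
      hne
      (hwn (i + 1) ((by decide : ∀ j : ZMod 5, j + 1 ≠ j) i))
      (hwn (i + 2) ((by decide : ∀ j : ZMod 5, j + 2 ≠ j) i))
      (hvn (i - 1) (i + 1) ((by decide : ∀ j : ZMod 5, j + 1 ≠ j - 1 + 1) i)
        ((by decide : ∀ j : ZMod 5, j - 1 ≠ j + 1 + 1) i))
      (hvn (i - 1) (i + 2) ((by decide : ∀ j : ZMod 5, j + 2 ≠ j - 1 + 1) i)
        ((by decide : ∀ j : ZMod 5, j - 1 ≠ j + 2 + 1) i))
      (hw'n (i + 1) ((by decide : ∀ j : ZMod 5, j + 1 ≠ j - 1) i))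
      (hw'n (i + 2) ((by decide : ∀ j : ZMod 5, j + 2 ≠ j - 1) i))
  · obtain ⟨h'r, h'adj⟩ := h'
    have hw'1 : G.Adj w' (v (i - 1)) := (h'adj (i - 1)).mpr (Or.inl rfl)
    have hw'n : ∀ j, j ≠ i - 1 → j ≠ i - 1 + 2 → ¬ G.Adj w' (v j) :=
      fun j hj1 hj2 h => by rcases (h'adj j).mp h with h' | h'; exacts [hj1 h', hj2 h']
    exact mkE G (v (i - 1)) w' (v i) w (v (i + 3)) (v (i + 2))
      hw'1.symm
      (hva (i - 1) i ((by decide : ∀ j : ZMod 5, j = j - 1 + 1) i))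
      hwv.symm
      ((hva (i + 3) (i - 1) ((by decide : ∀ j : ZMod 5, j - 1 = j + 3 + 1) i)).symm)
      ((hva (i + 2) (i + 3) ((by decide : ∀ j : ZMod 5, j + 3 = j + 2 + 1) i)).symm)
      (fun h => hwn (i - 1) ((by decide : ∀ j : ZMod 5, j - 1 ≠ j) i) h.symm)
      (hvn (i - 1) (i + 2) ((by decide : ∀ j : ZMod 5, j + 2 ≠ j - 1 + 1) i)
        ((by decide : ∀ j : ZMod 5, j - 1 ≠ j + 2 + 1) i))
      (hw'n i ((by decide : ∀ j : ZMod 5, j ≠ j - 1) i)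
        ((by decide : ∀ j : ZMod 5, j ≠ j - 1 + 2) i))
      (fun h => hne h.symm)
      (hw'n (i + 3) ((by decide : ∀ j : ZMod 5, j + 3 ≠ j - 1) i)
        ((by decide : ∀ j : ZMod 5, j + 3 ≠ j - 1 + 2) i))
      (hw'n (i + 2) ((by decide : ∀ j : ZMod 5, j + 2 ≠ j - 1) i)
        ((by decide : ∀ j : ZMod 5, j + 2 ≠ j - 1 + 2) i))
      (hvn i (i + 3) ((by decide : ∀ j : ZMod 5, j + 3 ≠ j + 1) i)
        ((by decide : ∀ j : ZMod 5, j ≠ j + 3 + 1) i))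
      (hvn i (i + 2) ((by decide : ∀ j : ZMod 5, j + 2 ≠ j + 1) i)
        ((by decide : ∀ j : ZMod 5, j ≠ j + 2 + 1) i))
      (hwn (i + 3) ((by decide : ∀ j : ZMod 5, j + 3 ≠ j) i))
      (hwn (i + 2) ((by decide : ∀ j : ZMod 5, j + 2 ≠ j) i))
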